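/- For every 1 ≤ i < j < k < l ≤ n there exists a unit Laurent monomial m ∈ L (that is, m = c·x^u with c ∈ k^× and u ∈ ℤ^P) such that φ(q_{ijkl}) = m · p_{ijkl} in L. -/

import Mathlib

/-! Statement 11.  Labels `1, …, n` are the nonzero elements of `Fin (n+1)`.
`L = K[x_{kl}^{±1} : (k,l) ∈ P]` and `L' = K[z_{ij}^{±1} : (i,j) ∈ ℰ]` are realized as
the monoid algebras of `ℤ^P` resp. `ℤ^ℰ` over the field `K`. -/

/-- Pairs `(k,l)` with `1 ≤ k < l ≤ n`. -/
abbrev PIdx (n : ℕ) := {p : Fin (n + 1) × Fin (n + 1) // 0 < p.1 ∧ p.1 < p.2}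

/-- Pairs `(i,j)` with `2 ≤ i < j ≤ n` and `(i,j) ≠ (2,3)`. -/
abbrev EIdx (n : ℕ) :=
  {q : Fin (n + 1) × Fin (n + 1) //
    1 < q.1 ∧ q.1 < q.2 ∧ q ≠ ((2 : Fin (n + 1)), (3 : Fin (n + 1)))}

/-- The `ℰ × P` matrix `D` of the paper. -/
def Dmat (n : ℕ) : Matrix (EIdx n) (PIdx n) ℤ := fun q p =>
  if p.val = q.val then 1
  else if (p.val = ((1 : Fin (n + 1)), (2 : Fin (n + 1))) ∨
           p.val = ((1 : Fin (n + 1)), (3 : Fin (n + 1)))) ∧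
          p.val.1 ≠ q.val.1 ∧ p.val.1 ≠ q.val.2 ∧
          p.val.2 ≠ q.val.1 ∧ p.val.2 ≠ q.val.2 then 1
  else if p.val = ((2 : Fin (n + 1)), (3 : Fin (n + 1))) then -1
  else if (p.val = ((1 : Fin (n + 1)), q.val.1) ∨
           p.val = ((1 : Fin (n + 1)), q.val.2)) ∧
          p.val.1 ≠ (2 : Fin (n + 1)) ∧ p.val.1 ≠ (3 : Fin (n + 1)) ∧
          p.val.2 ≠ (2 : Fin (n + 1)) ∧ p.val.2 ≠ (3 : Fin (n + 1)) then -1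
  else 0

/-- The Laurent monomial `x_{kl}` in `L = K[ℤ^P]`. -/
noncomputable def Xmon (n : ℕ) (K : Type*) [Field K] (p : PIdx n) :
    AddMonoidAlgebra K (PIdx n → ℤ) :=
  AddMonoidAlgebra.single (Pi.single p 1) 1

/-- The Laurent monomial `z̃_{ab}` in `L' = K[ℤ^ℰ]`: it is `z_{ab}` when
`(a,b) ∈ ℰ` and `1` otherwise. -/
noncomputable def Zt (n : ℕ) (K : Type*) [Field K] (a b : Fin (n + 1)) :
    AddMonoidAlgebra K (EIdx n → ℤ) :=
  if h : 1 < a ∧ a < b ∧ (a, b) ≠ ((2 : Fin (n + 1)), (3 : Fin (n + 1))) then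
    AddMonoidAlgebra.single (Pi.single (⟨(a, b), h⟩ : EIdx n) 1) 1
  else 1

/-- The Plücker relation `p_{ijkl} = x_{ij}x_{kl} - x_{ik}x_{jl} + x_{il}x_{jk} ∈ L`. -/
noncomputable def plucker (n : ℕ) (K : Type*) [Field K] (i j k l : Fin (n + 1))
    (h0 : 0 < i) (hij : i < j) (hjk : j < k) (hkl : k < l) :
    AddMonoidAlgebra K (PIdx n → ℤ) :=
  Xmon n K ⟨(i, j), h0, hij⟩ * Xmon n K ⟨(k, l), h0.trans (hij.trans hjk), hkl⟩
    - Xmon n K ⟨(i, k), h0, hij.trans hjk⟩ *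
        Xmon n K ⟨(j, l), h0.trans hij, hjk.trans hkl⟩
    + Xmon n K ⟨(i, l), h0, (hij.trans hjk).trans hkl⟩ *
        Xmon n K ⟨(j, k), h0.trans hij, hjk⟩

/-- The quadric `q_{ijkl} = z̃_{ij}z̃_{kl} - z̃_{ik}z̃_{jl} + z̃_{il}z̃_{jk} ∈ L'`. -/
noncomputable def qpoly (n : ℕ) (K : Type*) [Field K] (i j k l : Fin (n + 1)) :
    AddMonoidAlgebra K (EIdx n → ℤ) :=
  Zt n K i j * Zt n K k l - Zt n K i k * Zt n K j l + Zt n K i l * Zt n K j k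


section Aux
variable (n : ℕ)

/-- Indicator vector of the pair `(a,b)` in `ℤ^P`. -/
def ind (a b : Fin (n + 1)) : PIdx n → ℤ := fun p => if p.val = (a, b) then 1 else 0

/-- `F a = -e_{1a}` for `a ≠ 1`, and `F 1 = e_{23} - e_{12} - e_{13}`. -/
noncomputable def Fv (a : Fin (n + 1)) : PIdx n → ℤ :=
  if a = 1 then (fun p => ind n 2 3 p - ind n 1 2 p - ind n 1 3 p)
  else fun p => -(ind n 1 a p)

/-- `C = e_{12} + e_{13} - e_{23}`. -/
def Cv : PIdx n → ℤ := fun p => ind n 1 2 p + ind n 1 3 p - ind n 2 3 p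

/-- `R a b = e_{ab} + F a + F b + C`. -/
noncomputable def Rv (a b : Fin (n + 1)) : PIdx n → ℤ :=
  fun p => ind n a b p + Fv n a p + Fv n b p + Cv n p

end Aux

lemma ind_eq_single {n : ℕ} (a b : Fin (n + 1)) (h : 0 < a ∧ a < b) :
    ind n a b = Pi.single (⟨(a, b), h⟩ : PIdx n) 1 := by
  funext p
  simp only [ind, Pi.single_apply, Subtype.ext_iff]

lemma dmat_eq {n : ℕ} (hn : 4 ≤ n) (q : EIdx n) (p : PIdx n) :
    Dmat n q p = ind n q.val.1 q.val.2 p - ind n 1 q.val.1 p - ind n 1 q.val.2 p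
      + ind n 1 2 p + ind n 1 3 p - ind n 2 3 p := by
  obtain ⟨m, rfl⟩ : ∃ m, n = m + 4 := ⟨n - 4, by omega⟩
  obtain ⟨⟨i, j⟩, hi, hij, hne⟩ := q
  obtain ⟨⟨k, l⟩, hk, hkl⟩ := p
  have e0 : ((0 : Fin (m + 5)) : ℕ) = 0 := rfl
  have e1 : ((1 : Fin (m + 5)) : ℕ) = 1 := rfl
  have e2 : ((2 : Fin (m + 5)) : ℕ) = 2 := rfl
  have e3 : ((3 : Fin (m + 5)) : ℕ) = 3 := rfl
  simp only [Fin.lt_def, e0, e1] at hi hij hk hkl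
  simp only [ne_eq, Prod.ext_iff, Fin.ext_iff, e2, e3, not_and_or] at hne
  simp only [Dmat, ind, Prod.ext_iff, Fin.ext_iff, e1, e2, e3]
  split_ifs <;> omega

lemma vecMul_single_dmat {n : ℕ} (hn : 4 ≤ n) (q : EIdx n) :
    Matrix.vecMul (Pi.single q 1) (Dmat n) = Rv n q.val.1 q.val.2 := by
  rw [Matrix.single_one_vecMul]
  funext p
  have h1 : q.val.1 ≠ 1 := by
    intro h
    have := q.prop.1
    rw [h] at this
    exact absurd this (by simp)
  have h2 : q.val.2 ≠ 1 := by
    intro h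
    have := q.prop.1.trans q.prop.2.1
    rw [h] at this
    exact absurd this (by simp)
  rw [show ((Dmat n).row q p) = Dmat n q p from rfl]
  rw [dmat_eq hn q p]
  simp only [Rv, Fv, if_neg h1, if_neg h2, Cv]
  ring

lemma phi_Zt {n : ℕ} (hn : 4 ≤ n) {K : Type*} [Field K]
    (φ : AddMonoidAlgebra K (EIdx n → ℤ) →ₐ[K] AddMonoidAlgebra K (PIdx n → ℤ))
    (hφ : ∀ v : EIdx n → ℤ,
      φ (AddMonoidAlgebra.single v 1) = AddMonoidAlgebra.single (Matrix.vecMul v (Dmat n)) 1)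
    (a b : Fin (n + 1)) (ha : 0 < a) (hab : a < b) :
    φ (Zt n K a b) = AddMonoidAlgebra.single (Rv n a b) 1 := by
  unfold Zt
  split_ifs with h
  · rw [hφ, vecMul_single_dmat hn]
  · -- a = 1 or (a,b) = (2,3)
    have hz : Rv n a b = 0 := by
      rcases not_and_or.mp h with h1 | h'
      · -- a = 1  (since ¬ 1 < a and 0 < a)
        have ha1 : a = 1 := by
          obtain ⟨m, rfl⟩ : ∃ m, n = m + 4 := ⟨n - 4, by omega⟩
          have e1 : ((1 : Fin (m + 5)) : ℕ) = 1 := rfl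
          rw [Fin.ext_iff, e1]
          rw [Fin.lt_def] at ha h1
          simp only [e1] at h1 ⊢
          omega
        subst ha1
        have hb1 : b ≠ 1 := fun h => absurd (h ▸ hab) (lt_irrefl _)
        funext p
        simp only [Rv, Fv, if_pos rfl, if_neg hb1, Cv, Pi.zero_apply, if_true, ite_true]
        ring
      · rcases not_and_or.mp h' with h1 | h''
        · exact absurd hab h1
        · have hab23 : (a, b) = ((2 : Fin (n + 1)), (3 : Fin (n + 1))) := not_not.mp h''
          rw [Prod.ext_iff] at hab23
          obtain ⟨rfl, rfl⟩ : a = 2 ∧ b = 3 := ⟨hab23.1, hab23.2⟩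
          obtain ⟨m, rfl⟩ : ∃ m, n = m + 4 := ⟨n - 4, by omega⟩
          have e1 : ((1 : Fin (m + 5)) : ℕ) = 1 := rfl
          have e2' : ((2 : Fin (m + 5)) : ℕ) = 2 := rfl
          have e3' : ((3 : Fin (m + 5)) : ℕ) = 3 := rfl
          have h21 : (2 : Fin (m + 5)) ≠ 1 := by rw [ne_eq, Fin.ext_iff, e1, e2']; omega
          have h31 : (3 : Fin (m + 5)) ≠ 1 := by rw [ne_eq, Fin.ext_iff, e1, e3']; omega
          funext p
          simp only [Rv, Fv, if_neg h21, if_neg h31, Cv, Pi.zero_apply]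
          ring
    rw [hz, map_one]
    rfl

lemma single_eq_ind {n : ℕ} (a b : Fin (n + 1)) (h : 0 < a ∧ a < b) :
    (Pi.single (⟨(a, b), h⟩ : PIdx n) 1 : PIdx n → ℤ) = ind n a b :=
  (ind_eq_single a b h).symm


/-- Let `φ : L' → L` be the `K`-algebra homomorphism with
`φ(z_{ij}) = ∏_{(k,l)} x_{kl}^{D_{(i,j),(k,l)}}`.  Then for all labels
`1 ≤ i < j < k < l ≤ n` there is a unit Laurent monomial `m = c·x^u` (with `c ∈ K^×`,
`u ∈ ℤ^P`) such that `φ(q_{ijkl}) = m · p_{ijkl}` in `L`. -/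
theorem phi_qpoly_eq_monomial_mul_plucker (n : ℕ) (hn : 4 ≤ n)
    (K : Type*) [Field K]
    (φ : AddMonoidAlgebra K (EIdx n → ℤ) →ₐ[K] AddMonoidAlgebra K (PIdx n → ℤ))
    (hφ : ∀ v : EIdx n → ℤ,
      φ (AddMonoidAlgebra.single v 1) = AddMonoidAlgebra.single (Matrix.vecMul v (Dmat n)) 1) :
    ∀ (i j k l : Fin (n + 1)) (h0 : 0 < i) (hij : i < j) (hjk : j < k) (hkl : k < l),
      ∃ (c : K) (u : PIdx n → ℤ), c ≠ 0 ∧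
        φ (qpoly n K i j k l) =
          AddMonoidAlgebra.single u c * plucker n K i j k l h0 hij hjk hkl := by
  intro i j k l h0 hij hjk hkl
  refine ⟨1, fun p => Rv n i j p + Rv n k l p - ind n i j p - ind n k l p,
    one_ne_zero, ?_⟩
  rw [qpoly, map_add, map_sub, map_mul, map_mul, map_mul,
    phi_Zt hn φ hφ i j h0 hij,
    phi_Zt hn φ hφ k l (h0.trans (hij.trans hjk)) hkl,
    phi_Zt hn φ hφ i k h0 (hij.trans hjk),
    phi_Zt hn φ hφ j l (h0.trans hij) (hjk.trans hkl),
    phi_Zt hn φ hφ i l h0 ((hij.trans hjk).trans hkl),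
    phi_Zt hn φ hφ j k (h0.trans hij) hjk]
  unfold plucker Xmon
  simp only [AddMonoidAlgebra.single_mul_single, mul_sub, mul_add, mul_one, one_mul,
    single_eq_ind]
  have e1 : (Rv n i j + Rv n k l : PIdx n → ℤ) =
      (fun p => Rv n i j p + Rv n k l p - ind n i j p - ind n k l p)
        + (ind n i j + ind n k l) := by
    funext p; simp only [Pi.add_apply, Rv]; ring
  have e2 : (Rv n i k + Rv n j l : PIdx n → ℤ) =
      (fun p => Rv n i j p + Rv n k l p - ind n i j p - ind n k l p)
        + (ind n i k + ind n j l) := by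
    funext p; simp only [Pi.add_apply, Rv]; ring
  have e3 : (Rv n i l + Rv n j k : PIdx n → ℤ) =
      (fun p => Rv n i j p + Rv n k l p - ind n i j p - ind n k l p)
        + (ind n i l + ind n j k) := by
    funext p; simp only [Pi.add_apply, Rv]; ring
  rw [e1, e2, e3]
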